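/- For every integer k ≥ 1 and every t ∈ [0,1], the identity k·φ⁺(1/k², t) − (2·φ⁺((k+1)/(2k), t) − 1) = k·t holds. Consequently, for every integer k ≥ 2 and every t ∈ (0,1), N_Γ(k,t) ≤ N_C(k,t), where N_Γ(k,t) = 2·φ⁺((k+1)/(2k), t) − 1 if t + (k+1)/(2k) < 1 and N_Γ(k,t) = 1 otherwise, and N_C(k,t) = k·φ⁺(1/k², t) if t + 1/k² < 1 and N_C(k,t) = k otherwise. -/

import Mathlib

noncomputable section

/-- φ⁺(s,t) = s + t − 2st + 2√(st(1−s)(1−t)). -/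
def phiPlus (s t : ℝ) : ℝ :=
  s + t - 2 * s * t + 2 * Real.sqrt (s * t * (1 - s) * (1 - t))

/-- φ⁻(s,t) = s + t − 2st − 2√(st(1−s)(1−t)). -/
def phiMinus (s t : ℝ) : ℝ :=
  s + t - 2 * s * t - 2 * Real.sqrt (s * t * (1 - s) * (1 - t))

end

private lemma phi_sqrt_one (K t : ℝ) (hK0 : 0 < K)
    (hnn : 0 ≤ (K ^ 2 - 1) * (t * (1 - t))) :
    Real.sqrt (1 / K ^ 2 * t * (1 - 1 / K ^ 2) * (1 - t))
      = Real.sqrt ((K ^ 2 - 1) * (t * (1 - t))) / K ^ 2 := by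
  have harg : 1 / K ^ 2 * t * (1 - 1 / K ^ 2) * (1 - t)
      = (K ^ 2 - 1) * (t * (1 - t)) / (K ^ 2) ^ 2 := by
    field_simp
  rw [harg, Real.sqrt_div hnn, Real.sqrt_sq (sq_nonneg K)]

private lemma phi_sqrt_two (K t : ℝ) (hK0 : 0 < K)
    (hnn : 0 ≤ (K ^ 2 - 1) * (t * (1 - t))) :
    Real.sqrt ((K + 1) / (2 * K) * t * (1 - (K + 1) / (2 * K)) * (1 - t))
      = Real.sqrt ((K ^ 2 - 1) * (t * (1 - t))) / (2 * K) := by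
  have harg : (K + 1) / (2 * K) * t * (1 - (K + 1) / (2 * K)) * (1 - t)
      = (K ^ 2 - 1) * (t * (1 - t)) / (2 * K) ^ 2 := by
    field_simp; ring
  rw [harg, Real.sqrt_div hnn, Real.sqrt_sq (by linarith : (0:ℝ) ≤ 2 * K)]

private lemma phi_identity (K t : ℝ) (hK : 1 ≤ K) (ht0 : 0 ≤ t) (ht1 : t ≤ 1) :
    K * phiPlus (1 / K ^ 2) t - (2 * phiPlus ((K + 1) / (2 * K)) t - 1) = K * t := by
  have hK0 : (0:ℝ) < K := by linarith
  have hnn : 0 ≤ (K ^ 2 - 1) * (t * (1 - t)) :=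
    mul_nonneg (by nlinarith) (mul_nonneg ht0 (by linarith))
  unfold phiPlus
  rw [phi_sqrt_one K t hK0 hnn, phi_sqrt_two K t hK0 hnn]
  field_simp
  ring

private lemma phi_case3 (K t : ℝ) (hK : 2 ≤ K) (ht0 : 0 < t) (ht1 : t < 1)
    (hth : K - 1 ≤ 2 * K * t) : 1 ≤ K * phiPlus (1 / K ^ 2) t := by
  have hK0 : (0:ℝ) < K := by linarith
  have hnn : 0 ≤ (K ^ 2 - 1) * (t * (1 - t)) :=
    mul_nonneg (by nlinarith) (mul_nonneg ht0.le (by linarith))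
  set r := Real.sqrt ((K ^ 2 - 1) * (t * (1 - t))) with hr
  have hr0 : 0 ≤ r := Real.sqrt_nonneg _
  have hr2 : r ^ 2 = (K ^ 2 - 1) * (t * (1 - t)) := Real.sq_sqrt hnn
  unfold phiPlus
  rw [phi_sqrt_one K t hK0 hnn, ← hr]
  have hid : K * (1 / K ^ 2 + t - 2 * (1 / K ^ 2) * t + 2 * (r / K ^ 2)) - 1
      = (t * (K ^ 2 - 2) - (K - 1) + 2 * r) / K := by field_simp; ring
  have hnum : 0 ≤ t * (K ^ 2 - 2) - (K - 1) + 2 * r := by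
    rcases le_or_gt ((K - 1) - t * (K ^ 2 - 2)) 0 with h | h
    · linarith
    · have hsq : ((K - 1) - t * (K ^ 2 - 2)) ^ 2 ≤ (2 * r) ^ 2 := by
        rw [mul_pow, hr2]
        nlinarith [mul_nonneg (by linarith : (0:ℝ) ≤ 2 * K * t - (K - 1)) h.le,
          sq_nonneg (2 * K * t - (K - 1)), sq_nonneg (K - 2),
          mul_pos ht0 (by linarith : (0:ℝ) < 1 - t)]
      nlinarith [hr0, hsq]
  linarith [div_nonneg hnum hK0.le, hid]

/-- the identity k·φ⁺(1/k²,t) − (2·φ⁺((k+1)/(2k),t) − 1) = k·t, and the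
resulting comparison of the limiting norms of the partially transposed Choi matrix and
of the Choi matrix of a random quantum channel. -/
theorem norm_ptranspose_le_norm_choi :
    (∀ k : ℕ, 1 ≤ k → ∀ t ∈ Set.Icc (0 : ℝ) 1,
      (k : ℝ) * phiPlus (1 / (k : ℝ) ^ 2) t -
          (2 * phiPlus (((k : ℝ) + 1) / (2 * (k : ℝ))) t - 1) = (k : ℝ) * t) ∧
    (∀ k : ℕ, 2 ≤ k → ∀ t ∈ Set.Ioo (0 : ℝ) 1,
      (if t + ((k : ℝ) + 1) / (2 * (k : ℝ)) < 1 then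
          2 * phiPlus (((k : ℝ) + 1) / (2 * (k : ℝ))) t - 1
        else 1) ≤
      (if t + 1 / (k : ℝ) ^ 2 < 1 then (k : ℝ) * phiPlus (1 / (k : ℝ) ^ 2) t
        else (k : ℝ))) := by
  constructor
  · intro k hk t ht
    exact phi_identity (k : ℝ) t (by exact_mod_cast hk) ht.1 ht.2
  · intro k hk t ht
    have hK : (2:ℝ) ≤ (k : ℝ) := by exact_mod_cast hk
    have hK0 : (0:ℝ) < (k : ℝ) := by linarith
    have hid := phi_identity (k : ℝ) t (by linarith) ht.1.le ht.2.le
    split_ifs with h1 h2 h2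
    · nlinarith [mul_pos hK0 ht.1]
    · exfalso
      have hle : 1 / (k : ℝ) ^ 2 ≤ ((k : ℝ) + 1) / (2 * (k : ℝ)) := by
        rw [div_le_div_iff₀ (by positivity) (by positivity)]
        nlinarith
      linarith
    · apply phi_case3 (k : ℝ) t hK ht.1 ht.2
      push_neg at h1
      have := (le_div_iff₀ (by positivity : (0:ℝ) < 2 * (k : ℝ))).mp (by linarith : 1 - t ≤ ((k : ℝ) + 1) / (2 * (k : ℝ)))
      linarith
    · linarith
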